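/- Let N ∈ {1, 2}, α > 0 and σ ≥ 1. There exists a constant C_α > 0, depending only on N, σ, α, such that for every Schwartz function v : ℝ^N → ℂ and every Schwartz function u : ℝ^N → ℝ satisfying u − α²Δu = |v|^{σ+1} pointwise on ℝ^N, one has |∫_{ℝ^N} u(x) |v(x)|^{σ+1} dx| ≤ C_α ‖v‖_{L^{2(σ+1)}}^{2(σ+1)}. -/

import Mathlib

open MeasureTheory Real Set
open scoped ENNReal NNReal ComplexConjugate

noncomputable section

/-- Standard basis vector of `ℝ^N`. -/
def basisVec (N : ℕ) (i : Fin N) : EuclideanSpace ℝ (Fin N) :=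
  EuclideanSpace.single i 1

/-- The Laplacian of a function on `ℝ^N`. -/
def lap {E : Type*} [NormedAddCommGroup E] [NormedSpace ℝ E]
    (N : ℕ) (u : EuclideanSpace ℝ (Fin N) → E) (x : EuclideanSpace ℝ (Fin N)) : E :=
  ∑ i : Fin N, fderiv ℝ (fun y => fderiv ℝ u y (basisVec N i)) x (basisVec N i)

/-- The `L^p` norm (with real exponent `p`) of a function on `ℝ^N`. -/
def LpN (N : ℕ) {E : Type*} [NormedAddCommGroup E]
    (f : EuclideanSpace ℝ (Fin N) → E) (p : ℝ) : ℝ :=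
  (eLpNorm f (ENNReal.ofReal p) volume).toReal

/-- The `L²` norm of the (total) derivative of a function on `ℝ^N`. -/
def gradL2 (N : ℕ) (v : EuclideanSpace ℝ (Fin N) → ℂ) : ℝ :=
  (eLpNorm (fun x => fderiv ℝ v x) 2 volume).toReal

/-- The `H¹` norm of a function on `ℝ^N`. -/
def H1norm (N : ℕ) (v : EuclideanSpace ℝ (Fin N) → ℂ) : ℝ :=
  Real.sqrt ((LpN N v 2) ^ 2 + (gradL2 N v) ^ 2)


private lemma schwartz_mul_integrable {N : ℕ}
    (f g : SchwartzMap (EuclideanSpace ℝ (Fin N)) ℝ) :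
    Integrable (fun x => f x * g x) volume := by
  obtain ⟨C, _, h⟩ := f.decay 0 0
  refine (g.integrable (μ := volume)).bdd_mul (c := C) f.continuous.aestronglyMeasurable
    (Filter.Eventually.of_forall fun x => ?_)
  simpa using h x

private lemma schwartz_sum_apply {N : ℕ}
    (g : Fin N → SchwartzMap (EuclideanSpace ℝ (Fin N)) ℝ) (x : EuclideanSpace ℝ (Fin N)) :
    (∑ i, g i) x = ∑ i, g i x := by
  have := map_sum (FunLike.coeAddMonoidHom (SchwartzMap (EuclideanSpace ℝ (Fin N)) ℝ) (EuclideanSpace ℝ (Fin N)) ℝ) g Finset.univ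
  simp only [FunLike.coe_coeAddMonoidHom] at this
  rw [this]; simp

/-- for `N ∈ {1,2}`, the estimate
`|∫ u |v|^{σ+1} dx| ≤ C_α ‖v‖_{L^{2(σ+1)}}^{2(σ+1)}`
for the solution of the Helmholtz equation `u - α²Δu = |v|^{σ+1}`. -/
theorem stmt7 (N : ℕ) (hN : N = 1 ∨ N = 2) (α : ℝ) (hα : 0 < α) (σ : ℝ) (hσ : 1 ≤ σ) :
    ∃ C : ℝ, 0 < C ∧
      ∀ (v : SchwartzMap (EuclideanSpace ℝ (Fin N)) ℂ)
        (u : SchwartzMap (EuclideanSpace ℝ (Fin N)) ℝ),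
        (∀ x, u x - α ^ 2 * lap N (fun y => u y) x = ‖v x‖ ^ (σ + 1)) →
        |∫ x, u x * ‖v x‖ ^ (σ + 1)|
          ≤ C * (LpN N (fun x => v x) (2 * (σ + 1))) ^ (2 * (σ + 1)) := by
  refine ⟨1, one_pos, ?_⟩
  intro v u h
  let e : Fin N → EuclideanSpace ℝ (Fin N) := basisVec N
  let w : Fin N → SchwartzMap (EuclideanSpace ℝ (Fin N)) ℝ := fun i =>
    SchwartzMap.evalCLM ℝ _ ℝ (e i) (SchwartzMap.fderivCLM ℝ _ ℝ u)
  let z : Fin N → SchwartzMap (EuclideanSpace ℝ (Fin N)) ℝ := fun i =>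
    SchwartzMap.evalCLM ℝ _ ℝ (e i) (SchwartzMap.fderivCLM ℝ _ ℝ (w i))
  let F : SchwartzMap (EuclideanSpace ℝ (Fin N)) ℝ := u - (α ^ 2) • (∑ i, z i)
  have hlap : ∀ x, lap N (fun y => u y) x = ∑ i, z i x := fun x => rfl
  have hFsum : ∀ x, F x = u x - α ^ 2 * ∑ i, z i x := by
    intro x
    simp [F, SchwartzMap.sub_apply, SchwartzMap.smul_apply, schwartz_sum_apply,
      smul_eq_mul]
  have hF : ∀ x, F x = ‖v x‖ ^ (σ + 1) := by
    intro x
    have hx := h x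
    rw [hlap x] at hx
    rw [hFsum x]; exact hx
  -- integration by parts
  have ibp : ∀ i, ∫ x, u x * z i x = - ∫ x, w i x * w i x := by
    intro i
    exact integral_mul_fderiv_eq_neg_fderiv_mul_of_integrable
      (f := ⇑u) (g := ⇑(w i)) (v := e i) (μ := volume)
      (schwartz_mul_integrable (w i) (w i)) (schwartz_mul_integrable u (z i))
      (schwartz_mul_integrable u (w i)) (fun x _ => u.differentiableAt) (fun x _ => (w i).differentiableAt)
  have hI_uu := schwartz_mul_integrable u u
  have hI_FF := schwartz_mul_integrable F F
  have hI_uF := schwartz_mul_integrable u F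
  have hI_uz : ∀ i, Integrable (fun x => u x * z i x) volume :=
    fun i => schwartz_mul_integrable u (z i)
  set A := ∫ x, u x * F x with hAdef
  set B := ∫ x, u x * u x with hBdef
  set D := ∫ x, F x * F x with hDdef
  have hA : A = B + α ^ 2 * ∑ i, ∫ x, w i x * w i x := by
    have h1 : A = ∫ x, (u x * u x - α ^ 2 * ∑ i, u x * z i x) := by
      rw [hAdef]
      congr 1
      funext x
      rw [hFsum x, mul_sub, Finset.mul_sum, Finset.mul_sum]
      simp only [mul_comm, mul_left_comm, mul_assoc]
      rw [Finset.mul_sum]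
    rw [h1, integral_sub hI_uu
      ((integrable_finset_sum _ (fun i _ => hI_uz i)).const_mul _),
      integral_const_mul, integral_finset_sum _ (fun i _ => (hI_uz i))]
    simp only [ibp, Finset.sum_neg_distrib]
    ring
  have hB0 : 0 ≤ B := integral_nonneg fun x => mul_self_nonneg _
  have hS0 : 0 ≤ ∑ i, ∫ x, w i x * w i x :=
    Finset.sum_nonneg fun i _ => integral_nonneg fun x => mul_self_nonneg _
  have hBA : B ≤ A := by
    rw [hA]; nlinarith
  have hA0 : 0 ≤ A := le_trans hB0 hBA
  have hAD2 : A ≤ (B + D) / 2 := by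
    have hmono : A ≤ ∫ x, (u x * u x + F x * F x) / 2 :=
      integral_mono hI_uF ((hI_uu.add hI_FF).div_const 2)
        (fun x => by nlinarith [sq_nonneg (u x - F x)])
    calc A ≤ ∫ x, (u x * u x + F x * F x) / 2 := hmono
      _ = (B + D) / 2 := by rw [integral_div, integral_add hI_uu hI_FF]
  have hAD : A ≤ D := by linarith
  -- compute D
  have hpow : ∀ x : EuclideanSpace ℝ (Fin N), ‖v x‖ ^ (σ + 1) * ‖v x‖ ^ (σ + 1) = ‖v x‖ ^ (2 * (σ + 1)) := by
    intro x
    rw [← Real.rpow_add' (norm_nonneg _) (by linarith)]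
    ring_nf
  have hDeq : D = ∫ x, ‖v x‖ ^ (2 * (σ + 1)) := by
    rw [hDdef]
    exact integral_congr_ae (Filter.Eventually.of_forall fun x =>
      show F x * F x = _ by rw [hF x, hpow x])
  -- the L^p norm
  have hp0 : (0:ℝ) < 2 * (σ + 1) := by linarith
  set P : ℝ≥0∞ := ENNReal.ofReal (2 * (σ + 1)) with hPdef
  have hP0 : P ≠ 0 := (ENNReal.ofReal_pos.2 hp0).ne'
  have hPt : P ≠ ∞ := ENNReal.ofReal_ne_top
  have hPtoReal : P.toReal = 2 * (σ + 1) := ENNReal.toReal_ofReal hp0.le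
  have hIv : Integrable (fun x => ‖v x‖ ^ (2 * (σ + 1))) volume := by
    exact hI_FF.congr (Filter.Eventually.of_forall fun x =>
      show F x * F x = _ by rw [hF x, hpow x])
  have hmem : MemLp (fun x => v x) P volume := by
    rw [← memLp_norm_rpow_iff (q := P) v.continuous.aestronglyMeasurable hP0 hPt,
      ENNReal.div_self hP0 hPt, memLp_one_iff_integrable]
    exact hIv.congr (Filter.Eventually.of_forall fun x =>
      show ‖v x‖ ^ (2 * (σ + 1)) = ‖v x‖ ^ P.toReal by rw [hPtoReal])
  have hIv0 : 0 ≤ ∫ x, ‖v x‖ ^ (2 * (σ + 1)) :=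
    integral_nonneg fun x => Real.rpow_nonneg (norm_nonneg _) _
  have hLpN : (LpN N (fun x => v x) (2 * (σ + 1))) ^ (2 * (σ + 1))
      = ∫ x, ‖v x‖ ^ (2 * (σ + 1)) := by
    rw [LpN, ← hPdef, hmem.eLpNorm_eq_integral_rpow_norm hP0 hPt, hPtoReal,
      ENNReal.toReal_ofReal (Real.rpow_nonneg hIv0 _),
      ← Real.rpow_mul hIv0, inv_mul_cancel₀ hp0.ne', Real.rpow_one]
  -- conclude
  have hLHS : |∫ x, u x * ‖v x‖ ^ (σ + 1)| = A := by
    rw [hAdef]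
    have : (fun x : EuclideanSpace ℝ (Fin N) => u x * ‖v x‖ ^ (σ + 1)) = fun x => u x * F x := by
      funext x; rw [hF x]
    rw [this, abs_of_nonneg hA0]
  rw [hLHS, one_mul, hLpN]
  linarith [hDeq ▸ hAD]
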